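/- Let σ ≥ 1 and ρ > 0. Let z_b ≠ z_e and z_K be points of ℝ² such that the distance from z_K to the affine line through z_b and z_e is at least ρ, and dist(z_b, z_K) ≤ σ·ρ. Then sin(∠ z_K z_b z_e) ≥ 1/σ, and consequently the angle satisfies ∠ z_K z_b z_e ≥ arcsin(1/σ). -/

import Mathlib

open Metric EuclideanGeometry

/-- Angles of the auxiliary triangle adjacent to the edge are bounded below by
`arcsin (1/σ)`. -/
theorem angle_adjacent_to_edge_lower_bound
    (σ ρ : ℝ) (hσ : 1 ≤ σ) (hρ : 0 < ρ)
    (zb ze zK : EuclideanSpace ℝ (Fin 2)) (hne : zb ≠ ze)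
    (hdist : ρ ≤ Metric.infDist zK (affineSpan ℝ {zb, ze} : Set (EuclideanSpace ℝ (Fin 2))))
    (hK : dist zb zK ≤ σ * ρ) :
    1 / σ ≤ Real.sin (∠ zK zb ze) ∧ Real.arcsin (1 / σ) ≤ ∠ zK zb ze := by
  have hσ0 : (0:ℝ) < σ := lt_of_lt_of_le one_pos hσ
  set s : AffineSubspace ℝ (EuclideanSpace ℝ (Fin 2)) := affineSpan ℝ {zb, ze} with hs
  have hzb : zb ∈ s := mem_affineSpan ℝ (by simp)
  have hze : ze ∈ s := mem_affineSpan ℝ (by simp)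
  haveI : Nonempty s := ⟨⟨zb, hzb⟩⟩
  set p : EuclideanSpace ℝ (Fin 2) :=
    (EuclideanGeometry.orthogonalProjection s zK : EuclideanSpace ℝ (Fin 2)) with hp
  have hpmem : p ∈ s := EuclideanGeometry.orthogonalProjection_mem zK
  have hρp : ρ ≤ dist zK p := le_trans hdist (Metric.infDist_le_dist_of_mem hpmem)
  have hperp : zK -ᵥ p ∈ s.directionᗮ :=
    EuclideanGeometry.vsub_orthogonalProjection_mem_direction_orthogonal s zK
  -- main claim: the sine bound
  have hsin : 1 / σ ≤ Real.sin (∠ zK zb ze) := by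
    by_cases hpzb : p = zb
    · -- right angle at zb
      have hinner : inner ℝ (zK -ᵥ zb) (ze -ᵥ zb) = (0:ℝ) := by
        have := hperp (ze -ᵥ zb) (AffineSubspace.vsub_mem_direction hze hzb)
        rw [hpzb] at this
        rw [real_inner_comm]
        exact this
      have hangle : ∠ zK zb ze = Real.pi / 2 :=
        (InnerProductGeometry.inner_eq_zero_iff_angle_eq_pi_div_two _ _).mp hinner
      rw [hangle, Real.sin_pi_div_two]
      exact div_le_one_of_le₀ hσ (le_of_lt hσ0)
    · -- right angle at p; use the right-triangle sine formula
      have hright : ∠ zK p zb = Real.pi / 2 :=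
        (InnerProductGeometry.inner_eq_zero_iff_angle_eq_pi_div_two _ _).mp
          (real_inner_comm (zb -ᵥ p) (zK -ᵥ p) ▸
            hperp (zb -ᵥ p) (AffineSubspace.vsub_mem_direction hzb hpmem))
      have hformula := EuclideanGeometry.sin_angle_mul_dist_of_angle_eq_pi_div_two hright
      -- hformula : sin (∠ p zb zK) * dist zK zb = dist zK p
      -- relate ∠ p zb zK and ∠ zK zb ze via collinearity
      have hpdir : p -ᵥ zb ∈ s.direction := AffineSubspace.vsub_mem_direction hpmem hzb
      rw [hs, direction_affineSpan, vectorSpan_pair_rev,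
        Submodule.mem_span_singleton] at hpdir
      obtain ⟨t, ht⟩ := hpdir
      have ht0 : t ≠ 0 := by
        intro h
        rw [h, zero_smul] at ht
        exact hpzb (vsub_eq_zero_iff_eq.mp ht.symm)
      have hsineq : Real.sin (∠ p zb zK) = Real.sin (∠ zK zb ze) := by
        have h1 : ∠ p zb zK = ∠ zK zb p := EuclideanGeometry.angle_comm _ _ _
        rw [h1]
        unfold EuclideanGeometry.angle
        rw [← ht]
        rcases lt_or_gt_of_ne ht0 with htneg | htpos
        · rw [show t • (ze -ᵥ zb) = (-t) • (-(ze -ᵥ zb)) by rw [neg_smul, smul_neg, neg_neg],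
            InnerProductGeometry.angle_smul_right_of_pos _ _ (neg_pos.mpr htneg),
            InnerProductGeometry.angle_neg_right, Real.sin_pi_sub]
        · rw [InnerProductGeometry.angle_smul_right_of_pos _ _ htpos]
      have hdistpos : 0 < dist zK zb := by
        rcases eq_or_ne zK zb with h | h
        · exfalso
          have : Metric.infDist zK (s : Set (EuclideanSpace ℝ (Fin 2))) = 0 := by
            rw [h]
            exact Metric.infDist_zero_of_mem hzb
          linarith [hdist, this]
        · exact dist_pos.mpr h
      have hKb : dist zK zb ≤ σ * ρ := by rwa [dist_comm]
      rw [hsineq] at hformula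
      have : ρ ≤ Real.sin (∠ zK zb ze) * dist zK zb := by rw [hformula]; exact hρp
      rw [div_le_iff₀ hσ0]
      calc 1 = ρ / ρ := (div_self (ne_of_gt hρ)).symm
        _ ≤ (Real.sin (∠ zK zb ze) * dist zK zb) / ρ := by
            apply div_le_div_of_nonneg_right this hρ.le |>.trans_eq rfl
        _ ≤ (Real.sin (∠ zK zb ze) * (σ * ρ)) / ρ := by
            apply div_le_div_of_nonneg_right _ hρ.le
            apply mul_le_mul_of_nonneg_left hKb
            exact Real.sin_nonneg_of_nonneg_of_le_pi (EuclideanGeometry.angle_nonneg _ _ _)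
              (EuclideanGeometry.angle_le_pi _ _ _)
        _ = Real.sin (∠ zK zb ze) * σ := by field_simp
  refine ⟨hsin, ?_⟩
  -- arcsin bound
  have hangle_mem : 0 ≤ ∠ zK zb ze ∧ ∠ zK zb ze ≤ Real.pi :=
    ⟨EuclideanGeometry.angle_nonneg _ _ _, EuclideanGeometry.angle_le_pi _ _ _⟩
  rcases le_or_gt (Real.pi / 2) (∠ zK zb ze) with h | h
  · exact le_trans (Real.arcsin_le_pi_div_two _) h
  · calc Real.arcsin (1 / σ) ≤ Real.arcsin (Real.sin (∠ zK zb ze)) :=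
        Real.monotone_arcsin hsin
      _ = ∠ zK zb ze := Real.arcsin_sin (by linarith [Real.pi_pos]) (le_of_lt h)
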